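/- Let G be a group generated by a finite set S (with 1 ∈ S) acting on a compact metric space X, and let ε > 0. The ε-coding relation satisfies: if S^r ε-codes S^{r+1} for some r > 0, then S^r ε-codes G. -/

import Mathlib

/-- The ball of radius `r` centered at `g` in the left Cayley graph:
`S^r g = {s₁ ⋯ s_r g : sᵢ ∈ S}`. Since `1 ∈ S`, `ballS S r 1 = S^r`. -/
def ballS {G : Type*} [Group G] (S : Set G) (r : ℕ) (g : G) : Set G :=
  {x | ∃ l : List G, l.length = r ∧ (∀ s ∈ l, s ∈ S) ∧ x = l.prod * g}

lemma ballS_mono {G : Type*} [Group G] (S : Set G) (h1 : (1 : G) ∈ S) {m n : ℕ}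
    (hmn : m ≤ n) : ballS S m 1 ⊆ ballS S n 1 := by
  rintro x ⟨l, hl, hS, hx⟩
  refine ⟨l ++ List.replicate (n - m) 1, by simp [hl]; omega, ?_, by simp [hx]⟩
  intro s hs
  rcases List.mem_append.1 hs with h | h
  · exact hS s h
  · rw [List.eq_of_mem_replicate h]; exact h1

theorem stmt_4 {G X : Type*} [Group G] [MetricSpace X] [CompactSpace X] [MulAction G X]
    (hc : ∀ g : G, Continuous fun x : X => g • x)
    (S : Finset G) (h1 : (1 : G) ∈ S)
    (hgen : ∀ g : G, ∃ n : ℕ, g ∈ ballS (S : Set G) n 1)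
    (ε : ℝ) (hε : 0 < ε) (r : ℕ) (hr : 0 < r)
    (hcode : ∀ x y : X, (∀ h ∈ ballS (S : Set G) r 1, dist (h • x) (h • y) ≤ ε) →
      ∀ g ∈ ballS (S : Set G) (r + 1) 1, dist (g • x) (g • y) < ε) :
    ∀ x y : X, (∀ h ∈ ballS (S : Set G) r 1, dist (h • x) (h • y) ≤ ε) →
      ∀ g : G, dist (g • x) (g • y) < ε := by
  have key : ∀ n : ℕ, r + 1 ≤ n → ∀ x y : X,
      (∀ h ∈ ballS (S : Set G) r 1, dist (h • x) (h • y) ≤ ε) →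
      ∀ g ∈ ballS (S : Set G) n 1, dist (g • x) (g • y) < ε := by
    intro n hn
    induction n, hn using Nat.le_induction with
    | base => exact hcode
    | succ n hn ih =>
      intro x y hxy g hg
      obtain ⟨l, hl, hS, hx⟩ := hg
      set t := (l.drop (r + 1)).prod with ht
      have hg' : g = (l.take (r + 1)).prod * t := by
        rw [hx, mul_one, ht, ← List.prod_append, List.take_append_drop]
      have hx' : ∀ h ∈ ballS (S : Set G) r 1, dist (h • (t • x)) (h • (t • y)) ≤ ε := by
        intro h hh
        obtain ⟨lh, hlh, hlhS, hhx⟩ := hh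
        have hmem : h * t ∈ ballS (S : Set G) n 1 := by
          refine ⟨lh ++ l.drop (r + 1), by simp [hlh]; omega, ?_, by simp [hhx, ht]⟩
          intro s hs
          rcases List.mem_append.1 hs with h' | h'
          · exact hlhS s h'
          · exact hS s (List.mem_of_mem_drop h')
        have := ih x y hxy (h * t) hmem
        rw [mul_smul, mul_smul] at this
        exact this.le
      have htake : (l.take (r + 1)).prod * 1 ∈ ballS (S : Set G) (r + 1) 1 :=
        ⟨l.take (r + 1), by simp [hl]; omega, fun s hs => hS s (List.mem_of_mem_take hs), rfl⟩
      have hfin := hcode (t • x) (t • y) hx' _ htake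
      rw [mul_one, ← mul_smul, ← mul_smul, ← hg'] at hfin
      exact hfin
  intro x y hxy g
  obtain ⟨n, hgn⟩ := hgen g
  exact key (max n (r + 1)) (le_max_right _ _) x y hxy g
    (ballS_mono _ h1 (le_max_left _ _) hgn)
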